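/- Let n ≥ 5, let a be the smallest prime divisor of n, let 2 ≤ d < n - n/a, and let ℓ be a common prime divisor of n and d, with ℓ ≤ d and d ≠ n/2. Then for any prime power q, binom(n/ℓ, d/ℓ)_q · |GL(d/ℓ, q^ℓ)|/|GL(d,q)| · |GL((n-d)/ℓ, q^ℓ)|/|GL(n-d,q)| ≤ q^{-(ℓ-1)²-3}. -/

import Mathlib

/-- The Gaussian (`q`-)binomial coefficient `binom(n,k)_q`, via the product formula. -/
noncomputable def gbinom (q n k : ℕ) : ℝ :=
  ∏ i ∈ Finset.range k, ((q : ℝ) ^ (n - i) - 1) / ((q : ℝ) ^ (k - i) - 1)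

/-- The order of the general linear group `GL(k, 𝔽_r)`: `∏_{j=0}^{k-1} (r^k - r^j)`. -/
def cardGL (k r : ℕ) : ℕ := ∏ j ∈ Finset.range k, (r ^ k - r ^ j)

open Finset

private lemma aux_weier (x : ℝ) (h0 : 0 ≤ x) (hx : x ≤ 1) (j : ℕ) :
    1 - ∑ i ∈ range j, x ^ (i + 2) ≤ ∏ i ∈ range j, (1 - x ^ (i + 2)) := by
  induction j with
  | zero => simp
  | succ n ih =>
    rw [prod_range_succ, sum_range_succ]
    have h1 : (0:ℝ) ≤ 1 - x ^ (n + 2) := by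
      have := pow_le_one₀ h0 hx (n := n + 2); linarith
    have hS : (0:ℝ) ≤ ∑ i ∈ range n, x ^ (i + 2) :=
      sum_nonneg fun i _ => pow_nonneg h0 _
    nlinarith [pow_nonneg h0 (n + 2)]

private lemma aux_quarter (x : ℝ) (h0 : 0 ≤ x) (h2 : x ≤ 1/2) (k : ℕ) :
    (1/4 : ℝ) ≤ ∏ i ∈ range k, (1 - x ^ (i + 1)) := by
  cases k with
  | zero => norm_num
  | succ n =>
    rw [Finset.prod_range_succ']
    have hx1 : x ≤ 1 := by linarith
    have hsum : ∑ i ∈ range n, x ^ (i + 2) ≤ 2 * x ^ 2 := by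
      have : ∑ i ∈ range n, x ^ (i + 2) = x ^ 2 * ∑ i ∈ range n, x ^ i := by
        rw [mul_sum]; exact sum_congr rfl fun i _ => by ring
      rw [this]
      have hgeom : ∑ i ∈ range n, x ^ i ≤ 2 := by
        rcases eq_or_lt_of_le h0 with h | h
        · rcases n with _ | n
          · simp
          · rw [← h]; simp [zero_geom_sum]
        · have hne : x ≠ 1 := by linarith
          rw [geom_sum_eq hne]
          rw [div_le_iff_of_neg (by linarith : x - 1 < 0)]
          nlinarith [pow_nonneg h0 n]
      nlinarith [sq_nonneg x]
    have hW := aux_weier x h0 hx1 n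
    have key : (1 - 2 * x ^ 2) * (1 - x ^ (0 + 1)) ≤
        (∏ i ∈ range n, (1 - x ^ (i + 1 + 1))) * (1 - x ^ (0 + 1)) := by
      have h1x : (0:ℝ) ≤ 1 - x ^ (0 + 1) := by simpa using by linarith
      apply mul_le_mul_of_nonneg_right _ h1x
      calc 1 - 2 * x ^ 2 ≤ 1 - ∑ i ∈ range n, x ^ (i + 2) := by linarith
        _ ≤ ∏ i ∈ range n, (1 - x ^ (i + 2)) := hW
        _ = ∏ i ∈ range n, (1 - x ^ (i + 1 + 1)) := by exact prod_congr rfl fun i _ => by ring_nf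
    refine le_trans ?_ key
    simp only [pow_one, zero_add]
    nlinarith [mul_nonneg (by linarith : (0:ℝ) ≤ 1/2 - x)
      (by nlinarith : (0:ℝ) ≤ 3/2 + x - 2*x^2)]

private lemma cardGL_cast (k r : ℕ) (hr : 1 ≤ r) :
    (cardGL k r : ℝ) = ∏ j ∈ range k, ((r:ℝ) ^ k - (r:ℝ) ^ j) := by
  rw [cardGL, Nat.cast_prod]
  refine prod_congr rfl fun j hj => ?_
  rw [Nat.cast_sub (Nat.pow_le_pow_right hr (le_of_lt (mem_range.mp hj)))]
  push_cast; ring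

private lemma cardGL_pos (k r : ℕ) (hr : 2 ≤ r) : 0 < cardGL k r := by
  apply Finset.prod_pos
  intro j hj
  have := Nat.pow_lt_pow_right (by omega : 1 < r) (mem_range.mp hj)
  omega

private lemma cardGL_le (k r : ℕ) : cardGL k r ≤ r ^ (k * k) := by
  calc cardGL k r ≤ ∏ _j ∈ range k, r ^ k :=
        Finset.prod_le_prod' fun j _ => Nat.sub_le _ _
    _ = r ^ (k * k) := by rw [prod_const, card_range, ← pow_mul]

private lemma cardGL_ge (k q : ℕ) (hq : 2 ≤ q) : (q:ℝ) ^ (k * k) / 4 ≤ (cardGL k q : ℝ) := by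
  have hq0 : (0:ℝ) < q := by positivity
  have hx0 : (0:ℝ) ≤ ((q:ℝ))⁻¹ := by positivity
  have hx2 : ((q:ℝ))⁻¹ ≤ 1/2 := by
    rw [inv_le_comm₀ hq0 (by norm_num)]
    norm_num; exact_mod_cast hq
  rw [cardGL_cast k q (by omega)]
  have hfac : ∀ j ∈ range k, (q:ℝ) ^ k - (q:ℝ) ^ j = (q:ℝ) ^ k * (1 - ((q:ℝ))⁻¹ ^ (k - j)) := by
    intro j hj
    have hj' := le_of_lt (mem_range.mp hj)
    have : (q:ℝ) ^ k * ((q:ℝ))⁻¹ ^ (k - j) = (q:ℝ) ^ j := by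
      rw [inv_pow, mul_inv_eq_iff_eq_mul₀ (by positivity), ← pow_add]
      congr 1; omega
    rw [mul_sub, mul_one, this]
  rw [prod_congr rfl hfac, prod_mul_distrib, prod_const, card_range, ← pow_mul]
  have hrefl : ∏ j ∈ range k, (1 - ((q:ℝ))⁻¹ ^ (k - j))
      = ∏ i ∈ range k, (1 - ((q:ℝ))⁻¹ ^ (i + 1)) := by
    rw [← Finset.prod_range_reflect]
    refine prod_congr rfl fun j hj => ?_
    congr 2
    have := mem_range.mp hj; omega
  rw [hrefl]
  have h4 := aux_quarter ((q:ℝ))⁻¹ hx0 hx2 k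
  have hpow : (0:ℝ) ≤ (q:ℝ) ^ (k * k) := by positivity
  calc (q:ℝ) ^ (k * k) / 4 = (q:ℝ) ^ (k * k) * (1/4) := by ring
    _ ≤ _ := by exact mul_le_mul_of_nonneg_left h4 hpow

private lemma gbinom_nonneg (q m e : ℕ) (hq : 2 ≤ q) : 0 ≤ gbinom q m e := by
  apply prod_nonneg
  intro i _
  apply div_nonneg
  · have : (1:ℝ) ≤ (q:ℝ) ^ (m - i) := one_le_pow₀ (by exact_mod_cast (by omega : 1 ≤ q))
    linarith
  · have : (1:ℝ) ≤ (q:ℝ) ^ (e - i) := one_le_pow₀ (by exact_mod_cast (by omega : 1 ≤ q))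
    linarith

private lemma gbinom_le (q m e : ℕ) (hq : 2 ≤ q) (hem : e ≤ m) :
    gbinom q m e ≤ 4 * (q:ℝ) ^ (e * (m - e)) := by
  have hq0 : (0:ℝ) < q := by positivity
  have hq1 : (1:ℝ) < (q:ℝ) := by exact_mod_cast (by omega : 1 < q)
  set x : ℝ := ((q:ℝ))⁻¹ with hxdef
  have hx0 : (0:ℝ) ≤ x := by positivity
  have hx2 : x ≤ 1/2 := by
    rw [hxdef, inv_le_comm₀ hq0 (by norm_num)]
    norm_num; exact_mod_cast hq
  have step : gbinom q m e ≤ ∏ i ∈ range e, ((q:ℝ) ^ (m - e) / (1 - x ^ (e - i))) := by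
    apply prod_le_prod
    · intro i hi
      apply div_nonneg
      · have : (1:ℝ) ≤ (q:ℝ) ^ (m - i) := one_le_pow₀ (by linarith)
        linarith
      · have : (1:ℝ) ≤ (q:ℝ) ^ (e - i) := one_le_pow₀ (by linarith)
        linarith
    · intro i hi
      have hie : i < e := mem_range.mp hi
      have hden1 : (0:ℝ) < (q:ℝ) ^ (e - i) - 1 := by
        have : (1:ℝ) < (q:ℝ) ^ (e - i) := one_lt_pow₀ hq1 (by omega)
        linarith
      have hxei : x ^ (e - i) ≤ x ^ 1 := pow_le_pow_of_le_one hx0 (by linarith) (by omega)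
      have hden2 : (0:ℝ) < 1 - x ^ (e - i) := by
        simp only [pow_one] at hxei; linarith
      rw [div_le_div_iff₀ hden1 hden2]
      have hBt : (q:ℝ) ^ (e - i) * x ^ (e - i) = 1 := by
        rw [hxdef, inv_pow, mul_inv_cancel₀ (by positivity)]
      have hsplit : (q:ℝ) ^ (m - i) = (q:ℝ) ^ (m - e) * (q:ℝ) ^ (e - i) := by
        rw [← pow_add]; congr 1; omega
      have hABt : (q:ℝ) ^ (m - e) * ((q:ℝ) ^ (e - i) * x ^ (e - i)) = (q:ℝ) ^ (m - e) := by
        rw [hBt, mul_one]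
      have hx1 : x ^ (e - i) ≤ 1 := by linarith
      nlinarith [hsplit, hABt]
  refine le_trans step ?_
  rw [prod_div_distrib, prod_const, card_range, ← pow_mul]
  have hrefl : ∏ i ∈ range e, (1 - x ^ (e - i)) = ∏ i ∈ range e, (1 - x ^ (i + 1)) := by
    rw [← Finset.prod_range_reflect]
    refine prod_congr rfl fun j hj => ?_
    congr 2
    have := mem_range.mp hj; omega
  rw [hrefl]
  have h4 := aux_quarter x hx0 hx2 e
  rw [div_le_iff₀ (by linarith : (0:ℝ) < ∏ i ∈ range e, (1 - x ^ (i + 1)))]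
  calc (q:ℝ) ^ ((m-e) * e) = (q:ℝ) ^ (e * (m - e)) * 1 := by rw [mul_comm (m-e) e, mul_one]
    _ ≤ (q:ℝ) ^ (e * (m - e)) * (4 * ∏ i ∈ range e, (1 - x ^ (i + 1))) := by
        have : (1:ℝ) ≤ 4 * ∏ i ∈ range e, (1 - x ^ (i + 1)) := by linarith
        exact mul_le_mul_of_nonneg_left this (by positivity)
    _ = 4 * (q:ℝ) ^ (e * (m - e)) * ∏ i ∈ range e, (1 - x ^ (i + 1)) := by ring

private lemma keyZ (l e f : ℤ) (hl : 2 ≤ l) (he : 1 ≤ e) (hf : 1 ≤ f) (hef : e ≠ f)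
    (hlt : e + f < l * f) (hns : ¬(l = 2 ∧ e = 1 ∧ f = 2)) :
    e * f + (l - 1) ^ 2 + 9 ≤ l * (l - 1) * (e ^ 2 + f ^ 2) := by
  have h2ef : 2 * (e * f) ≤ e ^ 2 + f ^ 2 := by nlinarith [sq_nonneg (e - f)]
  rcases eq_or_lt_of_le hl with h2 | h3
  · have hl2 : l = 2 := h2.symm
    subst hl2
    have hef' : e < f := by omega
    have hf3 : 3 ≤ f := by
      rcases eq_or_lt_of_le hf with h | h
      · omega
      · by_contra hc
        push_neg at hc
        interval_cases f <;> omega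
    nlinarith [sq_nonneg (e - f), mul_le_mul hf3 hf3 (by omega) (by omega)]
  · have hs : 5 ≤ e ^ 2 + f ^ 2 := by
      have : 2 ≤ e ∨ 2 ≤ f := by omega
      rcases this with h | h <;> nlinarith
    nlinarith [mul_nonneg (mul_nonneg (by omega : (0:ℤ) ≤ l - 3) (by omega : (0:ℤ) ≤ l - 1))
        (by omega : (0:ℤ) ≤ e ^ 2 + f ^ 2 - 5),
      mul_nonneg (by omega : (0:ℤ) ≤ l - 3) (by omega : (0:ℤ) ≤ l - 1),
      mul_nonneg (by omega : (0:ℤ) ≤ l - 3) (by nlinarith : (0:ℤ) ≤ e ^ 2 + f ^ 2 - 5)]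

private lemma special_case (q : ℕ) (hq : 2 ≤ q) :
    gbinom q 3 1 * ((cardGL 1 (q^2) : ℝ) / (cardGL 2 q : ℝ)) *
      ((cardGL 2 (q^2) : ℝ) / (cardGL 4 q : ℝ)) ≤ (q:ℝ) ^ (-4 : ℤ) := by
  have hQ : (2:ℝ) ≤ (q:ℝ) := by exact_mod_cast hq
  set Q : ℝ := (q:ℝ) with hQdef
  have h1 : gbinom q 3 1 = (Q^3 - 1)/(Q - 1) := by
    simp [gbinom, Finset.prod_range_one, hQdef]
  have hc1 : (cardGL 1 (q^2) : ℝ) = Q^2 - 1 := by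
    rw [cardGL_cast 1 (q^2) (Nat.one_le_pow _ _ (by omega))]
    push_cast
    simp [Finset.prod_range_one, ← pow_mul, hQdef]
  have hc2 : (cardGL 2 q : ℝ) = (Q^2 - 1) * (Q^2 - Q) := by
    rw [cardGL_cast 2 q (by omega)]
    simp [Finset.prod_range_succ, hQdef]
  have hc3 : (cardGL 2 (q^2) : ℝ) = (Q^4 - 1) * (Q^4 - Q^2) := by
    rw [cardGL_cast 2 (q^2) (Nat.one_le_pow _ _ (by omega))]
    push_cast
    rw [Finset.prod_range_succ, Finset.prod_range_one, ← pow_mul]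
    norm_num [hQdef]
  have hc4 : (cardGL 4 q : ℝ) = (Q^4 - 1) * (Q^4 - Q) * (Q^4 - Q^2) * (Q^4 - Q^3) := by
    rw [cardGL_cast 4 q (by omega)]
    simp [Finset.prod_range_succ, hQdef]
  rw [h1, hc1, hc2, hc3, hc4]
  have hQ0 : (0:ℝ) < Q := by linarith
  have e1 : Q - 1 ≠ 0 := by nlinarith
  have e2 : Q^2 - 1 ≠ 0 := by nlinarith
  have e3 : Q^2 - Q ≠ 0 := by nlinarith
  have e4 : Q^4 - 1 ≠ 0 := by nlinarith
  have e5 : Q^4 - Q ≠ 0 := by nlinarith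
  have e6 : Q^4 - Q^2 ≠ 0 := by nlinarith
  have e7 : Q^4 - Q^3 ≠ 0 := by nlinarith
  have key : (Q^3 - 1)/(Q - 1) * ((Q^2 - 1) / ((Q^2 - 1) * (Q^2 - Q))) *
      ((Q^4 - 1) * (Q^4 - Q^2) / ((Q^4 - 1) * (Q^4 - Q) * (Q^4 - Q^2) * (Q^4 - Q^3)))
      = 1 / (Q^5 * (Q-1)^3) := by
    have e8 : Q^3 - 1 ≠ 0 := by nlinarith
    field_simp
  have hz : (Q:ℝ) ^ (-4 : ℤ) = 1 / Q^4 := by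
    rw [show (-4:ℤ) = -((4:ℕ):ℤ) by norm_num, zpow_neg, zpow_natCast, one_div]
  rw [key, hz]
  apply one_div_le_one_div_of_le (by positivity)
  have h1' : (1:ℝ) ≤ (Q-1)^3 := one_le_pow₀ (by linarith)
  have h45 : Q^4 ≤ Q^5 := pow_le_pow_right₀ (by linarith) (by omega)
  calc Q^4 ≤ Q^5 := h45
    _ = Q^5 * 1 := by ring
    _ ≤ Q^5 * (Q-1)^3 := mul_le_mul_of_nonneg_left h1' (by positivity)

set_option maxHeartbeats 1000000 in
/-- For `n ≥ 5`, `a` the smallest prime divisor of `n`, `2 ≤ d < n - n/a`, and `ℓ` a common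
prime divisor of `n` and `d` (so `ℓ ≤ d` and `d ≠ n/2`), for any prime power `q`:
`binom(n/ℓ,d/ℓ)_q · |GL(d/ℓ,q^ℓ)|/|GL(d,q)| · |GL((n-d)/ℓ,q^ℓ)|/|GL(n-d,q)| ≤ q^{-(ℓ-1)²-3}`. -/
theorem stmt_7 (n d ℓ q : ℕ) (hn : 5 ≤ n) (hd2 : 2 ≤ d)
    (hdlt : d < n - n / n.minFac) (hℓ : ℓ.Prime) (hℓn : ℓ ∣ n) (hℓd : ℓ ∣ d)
    (hℓle : ℓ ≤ d) (hdhalf : 2 * d ≠ n) (hq : IsPrimePow q) :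
    gbinom q (n / ℓ) (d / ℓ) * ((cardGL (d / ℓ) (q ^ ℓ) : ℝ) / (cardGL d q : ℝ)) *
        ((cardGL ((n - d) / ℓ) (q ^ ℓ) : ℝ) / (cardGL (n - d) q : ℝ)) ≤
      (q : ℝ) ^ (-(((ℓ : ℤ) - 1) ^ 2) - 3) := by
  have hq2 : 2 ≤ q := hq.two_le
  have hℓ2 : 2 ≤ ℓ := hℓ.two_le
  set t := n / n.minFac with ht
  clear_value t
  have hna : t ≤ n := ht ▸ Nat.div_le_self _ _
  have hdn : d < n := by omega
  have haℓ : n.minFac ≤ ℓ := Nat.minFac_le_of_dvd hℓ2 hℓn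
  have hE : t < n - d := by omega
  have hℓE : ℓ ∣ (n - d) := Nat.dvd_sub hℓn hℓd
  obtain ⟨e, hde⟩ := hℓd
  obtain ⟨f, hEf⟩ := hℓE
  have hdq : d / ℓ = e := by rw [hde]; exact Nat.mul_div_cancel_left e (by omega)
  have hEq : (n - d) / ℓ = f := by rw [hEf]; exact Nat.mul_div_cancel_left f (by omega)
  have hnval : n = ℓ * (e + f) := by rw [Nat.mul_add, ← hde, ← hEf]; omega
  have hnq : n / ℓ = e + f := by rw [hnval]; exact Nat.mul_div_cancel_left _ (by omega)
  have he1 : 1 ≤ e := by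
    rcases Nat.eq_zero_or_pos e with h | h
    · subst h; simp at hde; omega
    · exact h
  have hf1 : 1 ≤ f := by
    rcases Nat.eq_zero_or_pos f with h | h
    · subst h; simp at hEf; omega
    · exact h
  have hef : e ≠ f := by
    intro h
    apply hdhalf
    rw [hde, hnval, ← h]; ring
  have hlt : e + f < ℓ * f := by
    have h1 : n / ℓ ≤ t := by rw [ht]; exact Nat.div_le_div_left haℓ (Nat.minFac_pos n)
    calc e + f = n / ℓ := hnq.symm
      _ ≤ t := h1
      _ < n - d := hE
      _ = ℓ * f := hEf
  rw [hdq, hEq, hnq]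
  by_cases hsp : ℓ = 2 ∧ e = 1 ∧ f = 2
  · obtain ⟨hl2, he', hf'⟩ := hsp
    subst hl2 he' hf'
    have hd' : d = 2 := by omega
    have hE' : n - d = 4 := by omega
    rw [hE', hd']
    have : (-(((2:ℕ) : ℤ) - 1) ^ 2 - 3) = (-4 : ℤ) := by norm_num
    rw [this]
    exact special_case q hq2
  · -- general case
    have hq0 : (0:ℝ) < q := by positivity
    have hq0' : (q:ℝ) ≠ 0 := by positivity
    have hq1 : (1:ℝ) < (q:ℝ) := by exact_mod_cast (by omega : 1 < q)
    have hqℓ2 : 2 ≤ q ^ ℓ := le_trans hq2 (Nat.le_self_pow (by omega) q)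
    have hGLd_pos : (0:ℝ) < (cardGL d q : ℝ) := by exact_mod_cast cardGL_pos d q hq2
    have hGLE_pos : (0:ℝ) < (cardGL (n - d) q : ℝ) := by exact_mod_cast cardGL_pos (n - d) q hq2
    have hG : gbinom q (e + f) e ≤ 4 * (q:ℝ) ^ (e * f) := by
      have := gbinom_le q (e + f) e hq2 (by omega)
      rwa [Nat.add_sub_cancel_left] at this
    have hA1 : (cardGL e (q ^ ℓ) : ℝ) ≤ (q:ℝ) ^ (ℓ * (e * e)) := by
      have h := cardGL_le e (q ^ ℓ)
      have : ((q ^ ℓ) ^ (e * e) : ℕ) = q ^ (ℓ * (e * e)) := by rw [← pow_mul]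
      calc (cardGL e (q ^ ℓ) : ℝ) ≤ (((q ^ ℓ) ^ (e * e) : ℕ) : ℝ) := by exact_mod_cast h
        _ = (q:ℝ) ^ (ℓ * (e * e)) := by rw [this]; push_cast; ring
    have hA2 : (cardGL f (q ^ ℓ) : ℝ) ≤ (q:ℝ) ^ (ℓ * (f * f)) := by
      have h := cardGL_le f (q ^ ℓ)
      have : ((q ^ ℓ) ^ (f * f) : ℕ) = q ^ (ℓ * (f * f)) := by rw [← pow_mul]
      calc (cardGL f (q ^ ℓ) : ℝ) ≤ (((q ^ ℓ) ^ (f * f) : ℕ) : ℝ) := by exact_mod_cast h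
        _ = (q:ℝ) ^ (ℓ * (f * f)) := by rw [this]; push_cast; ring
    have hB1 : (q:ℝ) ^ (d * d) / 4 ≤ (cardGL d q : ℝ) := cardGL_ge d q hq2
    have hB2 : (q:ℝ) ^ ((n-d) * (n-d)) / 4 ≤ (cardGL (n-d) q : ℝ) := cardGL_ge (n-d) q hq2
    have hstep : gbinom q (e + f) e * ((cardGL e (q ^ ℓ) : ℝ) / (cardGL d q : ℝ)) *
        ((cardGL f (q ^ ℓ) : ℝ) / (cardGL (n - d) q : ℝ)) ≤
        (4 * (q:ℝ) ^ (e * f)) * ((q:ℝ) ^ (ℓ * (e * e)) / ((q:ℝ) ^ (d * d) / 4)) *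
        ((q:ℝ) ^ (ℓ * (f * f)) / ((q:ℝ) ^ ((n-d) * (n-d)) / 4)) := by
      have hd4 : (0:ℝ) < (q:ℝ) ^ (d * d) / 4 := by positivity
      have hE4 : (0:ℝ) < (q:ℝ) ^ ((n-d) * (n-d)) / 4 := by positivity
      have hb1 : (cardGL e (q ^ ℓ) : ℝ) / (cardGL d q : ℝ) ≤
          (q:ℝ) ^ (ℓ * (e * e)) / ((q:ℝ) ^ (d * d) / 4) :=
        div_le_div₀ (by positivity) hA1 hd4 hB1
      have hb2 : (cardGL f (q ^ ℓ) : ℝ) / (cardGL (n - d) q : ℝ) ≤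
          (q:ℝ) ^ (ℓ * (f * f)) / ((q:ℝ) ^ ((n-d) * (n-d)) / 4) :=
        div_le_div₀ (by positivity) hA2 hE4 hB2
      have hgb0 := gbinom_nonneg q (e + f) e hq2
      apply mul_le_mul
      · apply mul_le_mul hG hb1 (by positivity) (by positivity)
      · exact hb2
      · positivity
      · positivity
    refine le_trans hstep ?_
    have heq : (4 * (q:ℝ) ^ (e * f)) * ((q:ℝ) ^ (ℓ * (e * e)) / ((q:ℝ) ^ (d * d) / 4)) *
        ((q:ℝ) ^ (ℓ * (f * f)) / ((q:ℝ) ^ ((n-d) * (n-d)) / 4)) =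
        64 * ((q:ℝ) ^ (e * f + ℓ * (e * e) + ℓ * (f * f)) /
          (q:ℝ) ^ (d * d + (n-d) * (n-d))) := by
      rw [pow_add, pow_add, pow_add]
      field_simp
      ring
    rw [heq]
    set P : ℕ := e * f + ℓ * (e * e) + ℓ * (f * f) with hP
    set S : ℕ := d * d + (n-d) * (n-d) with hS
    have hzp : (q:ℝ) ^ P / (q:ℝ) ^ S = (q:ℝ) ^ ((P:ℤ) - (S:ℤ)) := by
      rw [← zpow_natCast (q:ℝ) P, ← zpow_natCast (q:ℝ) S, ← zpow_sub₀ hq0']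
    rw [hzp]
    have h64 : (64:ℝ) ≤ (q:ℝ) ^ (6:ℤ) := by
      have : ((2:ℝ)) ^ (6:ℕ) ≤ (q:ℝ) ^ (6:ℕ) := by
        apply pow_le_pow_left₀ (by norm_num)
        exact_mod_cast hq2
      calc (64:ℝ) = (2:ℝ) ^ (6:ℕ) := by norm_num
        _ ≤ (q:ℝ) ^ (6:ℕ) := this
        _ = (q:ℝ) ^ (6:ℤ) := by rw [← zpow_natCast]; norm_num
    have hexp : (6:ℤ) + ((P:ℤ) - (S:ℤ)) ≤ -(((ℓ:ℤ) - 1) ^ 2) - 3 := by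
      have hkey := keyZ (ℓ:ℤ) (e:ℤ) (f:ℤ) (by exact_mod_cast hℓ2) (by exact_mod_cast he1)
        (by exact_mod_cast hf1) (by exact_mod_cast hef) (by exact_mod_cast hlt)
        (by
          rintro ⟨h1, h2, h3⟩
          exact hsp ⟨by exact_mod_cast h1, by exact_mod_cast h2, by exact_mod_cast h3⟩)
      have hdZ : (d:ℤ) = (ℓ:ℤ) * (e:ℤ) := by exact_mod_cast hde
      have hEZ : ((n - d : ℕ):ℤ) = (ℓ:ℤ) * (f:ℤ) := by exact_mod_cast hEf
      have hPZ : (P:ℤ) = (e:ℤ) * f + ℓ * (e * e) + ℓ * (f * f) := by push_cast [hP]; ring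
      have hSZ : (S:ℤ) = (ℓ:ℤ) * e * (ℓ * e) + (ℓ * f) * (ℓ * f) := by
        push_cast [hS]
        rw [hdZ, hEZ]
      rw [hPZ, hSZ]
      linarith [hkey]
    calc 64 * (q:ℝ) ^ ((P:ℤ) - (S:ℤ)) ≤ (q:ℝ) ^ (6:ℤ) * (q:ℝ) ^ ((P:ℤ) - (S:ℤ)) := by
          apply mul_le_mul_of_nonneg_right h64 (by positivity)
      _ = (q:ℝ) ^ ((6:ℤ) + ((P:ℤ) - (S:ℤ))) := by rw [← zpow_add₀ hq0']
      _ ≤ (q:ℝ) ^ (-(((ℓ:ℤ) - 1) ^ 2) - 3) := by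
          apply zpow_le_zpow_right₀ (le_of_lt hq1) hexp
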